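/- If a class of games C is (λ,μ)-smooth (every game in C with a pure Nash equilibrium is (λ,μ)-smooth) under a sum-bounded social function, with λ > 0 and μ < 1, then the worst-case coarse-correlated price of anarchy over C is at most λ/(1−μ); in particular the supremum over G in C with equilibria of PPoA(SF,G) is at most inf over (λ,μ) ∈ A(C) of λ/(1−μ), i.e., at most the robust price of anarchy. -/
import Mathlib


open Finset

variable {n : ℕ} {S : Fin n → Type}

/-- A cost minimization game with player set `Fin n` and strategy sets `S i`:
cost functions `c` and a social function `SF`. -/
structure CMGame (n : ℕ) (S : Fin n → Type) where
  c : ((i : Fin n) → S i) → Fin n → ℝ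
  SF : ((i : Fin n) → S i) → ℝ

def CMGame.smooth (G : CMGame n S) (lam μ : ℝ) [∀ i, Fintype (S i)] : Prop :=
  ∀ σ σ' : (i : Fin n) → S i,
    (∑ i, G.c (Function.update σ i (σ' i)) i) ≤ lam * G.SF σ' + μ * G.SF σ

def CMGame.sumBounded (G : CMGame n S) [∀ i, Fintype (S i)] : Prop :=
  ∀ σ, G.SF σ ≤ ∑ i, G.c σ i

def CMGame.isPNE (G : CMGame n S) (σ : (i : Fin n) → S i) : Prop :=
  ∀ (i : Fin n) (x : S i), G.c σ i ≤ G.c (Function.update σ i x) i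

def CMGame.isCCE (G : CMGame n S) [∀ i, Fintype (S i)] [∀ i, DecidableEq (S i)]
    (p : ((i : Fin n) → S i) → ℝ) : Prop :=
  (∀ σ, 0 ≤ p σ) ∧ (∑ σ, p σ = 1) ∧
  ∀ (i : Fin n) (x : S i),
    (∑ σ, p σ * G.c σ i) ≤ ∑ σ, p σ * G.c (Function.update σ i x) i

/-- if every game of the class `C` admitting a pure Nash equilibrium is
(λ,μ)-smooth under its sum-bounded social function, with λ > 0 and μ < 1, then for
every such game both the pure and the coarse correlated price of anarchy are at most
λ/(1−μ); hence the worst-case (pure and coarse correlated) price of anarchy over `C`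
is at most the robust price of anarchy. -/
theorem stmt12 [∀ i, Fintype (S i)] [∀ i, DecidableEq (S i)]
    (C : Set (CMGame n S))
    (hnn : ∀ G ∈ C, (∀ σ i, 0 ≤ G.c σ i) ∧ (∀ σ, 0 ≤ G.SF σ))
    (hsb : ∀ G ∈ C, G.sumBounded)
    (lam μ : ℝ) (hlam : 0 < lam) (hμ : μ < 1)
    (hA : ∀ G ∈ C, (∃ σ, G.isPNE σ) → G.smooth lam μ) :
    ∀ G ∈ C, (∃ σ, G.isPNE σ) →
      ∀ (o : (i : Fin n) → S i), (∀ τ, G.SF o ≤ G.SF τ) → 0 < G.SF o →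
        (∀ σ, G.isPNE σ → G.SF σ / G.SF o ≤ lam / (1 - μ)) ∧
        (∀ p, G.isCCE p → (∑ σ, p σ * G.SF σ) / G.SF o ≤ lam / (1 - μ)) := by

  intro G hG hex o ho hpos
  have h1μ : 0 < 1 - μ := by linarith
  have hsm := hA G hG hex
  have key : ∀ X : ℝ, X ≤ lam * G.SF o + μ * X → X / G.SF o ≤ lam / (1 - μ) := by
    intro X hX
    rw [div_le_div_iff₀ hpos h1μ]
    nlinarith
  constructor
  · intro σ hσ
    apply key
    calc G.SF σ ≤ ∑ i, G.c σ i := hsb G hG σ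
      _ ≤ ∑ i, G.c (Function.update σ i (o i)) i :=
            Finset.sum_le_sum (fun i _ => hσ i (o i))
      _ ≤ lam * G.SF o + μ * G.SF σ := hsm σ o
  · intro p hp
    obtain ⟨hp0, hp1, hpE⟩ := hp
    apply key
    calc ∑ σ, p σ * G.SF σ ≤ ∑ σ, p σ * ∑ i, G.c σ i := by
            refine Finset.sum_le_sum (fun σ _ => ?_)
            exact mul_le_mul_of_nonneg_left (hsb G hG σ) (hp0 σ)
      _ = ∑ i, ∑ σ, p σ * G.c σ i := by
            rw [Finset.sum_comm]; simp [Finset.mul_sum]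
      _ ≤ ∑ i, ∑ σ, p σ * G.c (Function.update σ i (o i)) i :=
            Finset.sum_le_sum (fun i _ => hpE i (o i))
      _ = ∑ σ, p σ * ∑ i, G.c (Function.update σ i (o i)) i := by
            rw [Finset.sum_comm]; simp [Finset.mul_sum]
      _ ≤ ∑ σ, p σ * (lam * G.SF o + μ * G.SF σ) := by
            refine Finset.sum_le_sum (fun σ _ => ?_)
            exact mul_le_mul_of_nonneg_left (hsm σ o) (hp0 σ)
      _ = ∑ σ, (p σ * (lam * G.SF o) + μ * (p σ * G.SF σ)) := by
            refine Finset.sum_congr rfl (fun σ _ => by ring)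
      _ = (∑ σ, p σ) * (lam * G.SF o) + μ * ∑ σ, p σ * G.SF σ := by
            rw [Finset.sum_add_distrib, ← Finset.sum_mul, ← Finset.mul_sum]
      _ = lam * G.SF o + μ * ∑ σ, p σ * G.SF σ := by rw [hp1]; ring
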